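/- arXiv:1509.08400 — 5 statements merged into one kernel-verified Lean document; each statement's English description precedes it below -/
import Mathlib

section
/- The shuffle relation for multiple zeta values: ζ(2)·ζ(2) = 2ζ(2,2) + 4ζ(1,3), where ζ(n₁,n₂) = Σ_{0<k₁<k₂} 1/(k₁^{n₁} k₂^{n₂}). -/
/-- The Riemann zeta value ζ(n) = Σ_{k ≥ 1} 1/kⁿ. -/
noncomputable def riemannZetaValue (n : ℕ) : ℝ := ∑' k : ℕ+, 1 / (k : ℝ) ^ n

/-- The double zeta value ζ(n₁, n₂) = Σ_{0 < k₁ < k₂} 1/(k₁^{n₁} k₂^{n₂}). -/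
noncomputable def doubleZetaValue (n₁ n₂ : ℕ) : ℝ :=
  ∑' p : {p : ℕ+ × ℕ+ // p.1 < p.2}, 1 / ((p.val.1 : ℝ) ^ n₁ * (p.val.2 : ℝ) ^ n₂)

/-- The bijection (m, k) ↦ (m, m + k) from pairs of positive integers onto
strictly increasing pairs. -/
def pairEquiv : (ℕ+ × ℕ+) ≃ {p : ℕ+ × ℕ+ // p.1 < p.2} where
  toFun q := ⟨(q.1, q.1 + q.2), PNat.lt_add_right q.1 q.2⟩
  invFun p := (p.val.1, p.val.2 - p.val.1)
  left_inv q := by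
    ext
    · rfl
    · show q.1 + q.2 - q.1 = q.2
      rw [add_comm]; exact PNat.add_sub
  right_inv p := by
    apply Subtype.ext
    ext
    · rfl
    · show p.val.1 + (p.val.2 - p.val.1) = p.val.2
      rw [add_comm]; exact PNat.sub_add_of_lt p.prop

lemma doubleZetaValue_eq (n₁ n₂ : ℕ) :
    doubleZetaValue n₁ n₂ =
      ∑' q : ℕ+ × ℕ+, 1 / ((q.1 : ℝ) ^ n₁ * ((q.1 : ℝ) + (q.2 : ℝ)) ^ n₂) := by
  rw [doubleZetaValue, ← pairEquiv.tsum_eq]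
  apply tsum_congr
  intro q
  have : ((((q.1 + q.2 : ℕ+)) : ℝ)) = (q.1 : ℝ) + (q.2 : ℝ) := by
    push_cast
    rfl
  simp [pairEquiv, this]

set_option maxHeartbeats 2000000 in
/-- Shuffle relation: ζ(2)·ζ(2) = 2ζ(2,2) + 4ζ(1,3). -/
theorem zeta2_mul_zeta2 :
    riemannZetaValue 2 * riemannZetaValue 2 =
      2 * doubleZetaValue 2 2 + 4 * doubleZetaValue 1 3 := by
  -- positivity facts
  have hpos : ∀ k : ℕ+, (0:ℝ) < (k : ℝ) := fun k => by exact_mod_cast k.pos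
  -- summability of 1/k^2 over ℕ+
  have h2 : Summable (fun k : ℕ+ => 1 / (k : ℝ) ^ 2) := by
    have := (Real.summable_one_div_nat_pow (p := 2)).mpr one_lt_two
    exact this.comp_injective (fun a b h => PNat.coe_injective h)
  -- summability of the product over pairs
  have hf : Summable (fun z : ℕ+ × ℕ+ => (1 / (z.1 : ℝ) ^ 2) * (1 / (z.2 : ℝ) ^ 2)) :=
    h2.mul_of_nonneg h2 (fun k => by positivity) (fun k => by positivity)
  -- the four pieces
  set g1 : ℕ+ × ℕ+ → ℝ := fun q => 1 / ((q.1 : ℝ) ^ 2 * ((q.1 : ℝ) + (q.2 : ℝ)) ^ 2) with hg1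
  set g2 : ℕ+ × ℕ+ → ℝ := fun q => 1 / ((q.2 : ℝ) ^ 2 * ((q.1 : ℝ) + (q.2 : ℝ)) ^ 2) with hg2
  set g3 : ℕ+ × ℕ+ → ℝ := fun q => 1 / ((q.1 : ℝ) ^ 1 * ((q.1 : ℝ) + (q.2 : ℝ)) ^ 3) with hg3
  set g4 : ℕ+ × ℕ+ → ℝ := fun q => 1 / ((q.2 : ℝ) ^ 1 * ((q.1 : ℝ) + (q.2 : ℝ)) ^ 3) with hg4
  -- domination bounds
  have key_le : ∀ (q : ℕ+ × ℕ+) (i : Fin 4),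
      ([g1, g2, g3, g4].get i) q ≤ (1 / (q.1 : ℝ) ^ 2) * (1 / (q.2 : ℝ) ^ 2) := by
    intro ⟨m, n⟩ i
    have hm := hpos m
    have hn := hpos n
    have hmn : (0:ℝ) < (m : ℝ) + (n : ℝ) := by linarith
    fin_cases i <;>
    · simp only [hg1, hg2, hg3, hg4, List.get]
      rw [div_mul_div_comm, one_mul]
      apply one_div_le_one_div_of_le (by positivity)
      nlinarith [sq_nonneg ((m:ℝ) + n), sq_nonneg ((m:ℝ) - n), sq_nonneg (m:ℝ), sq_nonneg (n:ℝ),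
        mul_pos hm hn, mul_pos (mul_pos hm hn) hmn]
  have key_nonneg : ∀ (q : ℕ+ × ℕ+) (i : Fin 4), 0 ≤ ([g1, g2, g3, g4].get i) q := by
    intro ⟨m, n⟩ i
    have hm := hpos m
    have hn := hpos n
    fin_cases i <;> · simp only [hg1, hg2, hg3, hg4, List.get]; positivity
  have hs1 : Summable g1 :=
    Summable.of_nonneg_of_le (fun q => key_nonneg q 0) (fun q => key_le q 0) hf
  have hs2 : Summable g2 :=
    Summable.of_nonneg_of_le (fun q => key_nonneg q 1) (fun q => key_le q 1) hf
  have hs3 : Summable g3 :=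
    Summable.of_nonneg_of_le (fun q => key_nonneg q 2) (fun q => key_le q 2) hf
  have hs4 : Summable g4 :=
    Summable.of_nonneg_of_le (fun q => key_nonneg q 3) (fun q => key_le q 3) hf
  -- pointwise algebraic identity
  have hpt : ∀ q : ℕ+ × ℕ+,
      (1 / (q.1 : ℝ) ^ 2) * (1 / (q.2 : ℝ) ^ 2)
        = g1 q + g2 q + (2 * g3 q + 2 * g4 q) := by
    intro ⟨m, n⟩
    have hm := hpos m
    have hn := hpos n
    have hmn : (0:ℝ) < (m : ℝ) + (n : ℝ) := by linarith
    simp only [hg1, hg2, hg3, hg4]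
    field_simp
    ring
  -- symmetry: swapping coordinates
  have hswap12 : ∑' q : ℕ+ × ℕ+, g2 q = ∑' q : ℕ+ × ℕ+, g1 q := by
    rw [← (Equiv.prodComm ℕ+ ℕ+).tsum_eq g2]
    apply tsum_congr
    intro q
    simp only [hg1, hg2, Equiv.prodComm_apply, Prod.fst_swap, Prod.snd_swap]
    rw [add_comm]
  have hswap34 : ∑' q : ℕ+ × ℕ+, g4 q = ∑' q : ℕ+ × ℕ+, g3 q := by
    rw [← (Equiv.prodComm ℕ+ ℕ+).tsum_eq g4]
    apply tsum_congr
    intro q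
    simp only [hg3, hg4, Equiv.prodComm_apply, Prod.fst_swap, Prod.snd_swap]
    rw [add_comm]
  -- put everything together
  have habs : Summable fun k : ℕ+ => ‖1 / (k : ℝ) ^ 2‖ := by
    simpa only [Real.norm_eq_abs] using h2.abs
  calc riemannZetaValue 2 * riemannZetaValue 2
      = ∑' z : ℕ+ × ℕ+, (1 / (z.1 : ℝ) ^ 2) * (1 / (z.2 : ℝ) ^ 2) := by
        rw [riemannZetaValue]
        exact tsum_mul_tsum_of_summable_norm habs habs
    _ = ∑' z : ℕ+ × ℕ+, (g1 z + g2 z + (2 * g3 z + 2 * g4 z)) := tsum_congr hpt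
    _ = (∑' z, g1 z) + (∑' z, g2 z) + (2 * ∑' z, g3 z + 2 * ∑' z, g4 z) := by
        rw [Summable.tsum_add ((hs1.add hs2)) (((hs3.mul_left 2)).add ((hs4.mul_left 2))),
          Summable.tsum_add hs1 hs2, Summable.tsum_add (hs3.mul_left 2) (hs4.mul_left 2),
          tsum_mul_left, tsum_mul_left]
    _ = 2 * doubleZetaValue 2 2 + 4 * doubleZetaValue 1 3 := by
        rw [hswap12, hswap34, doubleZetaValue_eq, doubleZetaValue_eq]
        simp only [hg1, hg3]
        ring
end

section
/- The shuffle relation for multiple zeta values: ζ(3)·ζ(3) = 2ζ(3,3) + 6ζ(2,4) + 12ζ(1,5). -/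
namespace Zeta3Aux

noncomputable def g (k : ℕ) (p : ℕ+ × ℕ+) : ℝ :=
  1 / ((p.1 : ℝ) ^ k * ((p.1 : ℝ) + (p.2 : ℝ)) ^ (6 - k))

noncomputable def F (p : ℕ+ × ℕ+) : ℝ := 1 / ((p.1 : ℝ) ^ 3 * (p.2 : ℝ) ^ 3)

lemma one_le_pnat (a : ℕ+) : (1 : ℝ) ≤ (a : ℝ) := by exact_mod_cast a.one_le

lemma pnat_pos (a : ℕ+) : (0 : ℝ) < (a : ℝ) := lt_of_lt_of_le one_pos (one_le_pnat a)

lemma hf_summable : Summable (fun k : ℕ+ => 1 / (k : ℝ) ^ 3) := by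
  have h : Summable (fun n : ℕ => 1 / (n : ℝ) ^ 3) :=
    Real.summable_one_div_nat_pow.mpr (by norm_num)
  have := h.comp_injective (PNat.coe_injective)
  exact this

lemma hprod_summable :
    Summable (fun p : ℕ+ × ℕ+ => (1 / (p.1 : ℝ) ^ 3) * (1 / (p.2 : ℝ) ^ 3)) := by
  apply Summable.mul_of_nonneg hf_summable hf_summable <;>
    · rw [Pi.le_def]; intro k; positivity

lemma hF_summable : Summable F := by
  apply hprod_summable.congr
  intro p
  rw [F, div_mul_div_comm, one_mul]

lemma g_le_F (k : ℕ) (hk1 : 1 ≤ k) (hk3 : k ≤ 3) (p : ℕ+ × ℕ+) : g k p ≤ F p := by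
  rcases p with ⟨a, b⟩
  have ha := pnat_pos a
  have hb := pnat_pos b
  rw [g, F]
  apply one_div_le_one_div_of_le (by positivity)
  interval_cases k
  · calc (a : ℝ) ^ 3 * (b : ℝ) ^ 3 = (a : ℝ) ^ 1 * ((a : ℝ) ^ 2 * (b : ℝ) ^ 3) := by ring
      _ ≤ (a : ℝ) ^ 1 * (((a : ℝ) + b) ^ 2 * ((a : ℝ) + b) ^ 3) := by gcongr <;> linarith
      _ = (a : ℝ) ^ 1 * ((a : ℝ) + b) ^ (6 - 1) := by norm_num; ring
  · calc (a : ℝ) ^ 3 * (b : ℝ) ^ 3 = (a : ℝ) ^ 2 * ((a : ℝ) ^ 1 * (b : ℝ) ^ 3) := by ring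
      _ ≤ (a : ℝ) ^ 2 * (((a : ℝ) + b) ^ 1 * ((a : ℝ) + b) ^ 3) := by gcongr <;> linarith
      _ = (a : ℝ) ^ 2 * ((a : ℝ) + b) ^ (6 - 2) := by norm_num; ring
  · calc (a : ℝ) ^ 3 * (b : ℝ) ^ 3 ≤ (a : ℝ) ^ 3 * ((a : ℝ) + b) ^ 3 := by gcongr <;> linarith
      _ = (a : ℝ) ^ 3 * ((a : ℝ) + b) ^ (6 - 3) := by norm_num

lemma g_nonneg (k : ℕ) (p : ℕ+ × ℕ+) : 0 ≤ g k p := by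
  rcases p with ⟨a, b⟩
  have ha := pnat_pos a
  have hb := pnat_pos b
  rw [g]
  positivity

lemma g_summable (k : ℕ) (hk1 : 1 ≤ k) (hk3 : k ≤ 3) : Summable (g k) :=
  Summable.of_nonneg_of_le (g_nonneg k) (g_le_F k hk1 hk3) hF_summable

/-- swapped version of g -/
noncomputable def g' (k : ℕ) (p : ℕ+ × ℕ+) : ℝ :=
  1 / ((p.2 : ℝ) ^ k * ((p.1 : ℝ) + (p.2 : ℝ)) ^ (6 - k))

lemma g'_summable (k : ℕ) (hk1 : 1 ≤ k) (hk3 : k ≤ 3) : Summable (g' k) := by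
  have := (g_summable k hk1 hk3).comp_injective (Equiv.prodComm ℕ+ ℕ+).injective
  apply this.congr
  intro p
  simp only [g, g', Function.comp, Equiv.prodComm_apply, Prod.fst_swap, Prod.snd_swap]
  ring_nf

lemma tsum_g'_eq (k : ℕ) : ∑' p, g' k p = ∑' p, g k p := by
  rw [← (Equiv.prodComm ℕ+ ℕ+).tsum_eq (g k)]
  apply tsum_congr
  intro p
  simp only [g, g', Equiv.prodComm_apply, Prod.fst_swap, Prod.snd_swap]
  ring_nf

def eAdd : ℕ+ × ℕ+ ≃ {p : ℕ+ × ℕ+ // p.1 < p.2} where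
  toFun p := ⟨(p.1, p.1 + p.2), by simp [PNat.lt_add_right]⟩
  invFun q := (q.val.1, q.val.2 - q.val.1)
  left_inv p := by
    have : p.1 + p.2 - p.1 = p.2 := by rw [add_comm]; exact PNat.add_sub
    simp [this]
  right_inv q := by
    ext <;> simp [PNat.add_sub_of_lt q.prop]

lemma tsum_g_eq (k : ℕ) : ∑' p, g k p = doubleZetaValue k (6 - k) := by
  rw [doubleZetaValue, ← eAdd.tsum_eq]
  apply tsum_congr
  intro p
  simp only [eAdd, Equiv.coe_fn_mk, g]
  push_cast
  ring_nf

lemma myTsumAdd {f g : ℕ+ × ℕ+ → ℝ} (hf : Summable f) (hg : Summable g) :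
    ∑' p, (f p + g p) = ∑' p, f p + ∑' p, g p :=
  (hf.hasSum.add hg.hasSum).tsum_eq

lemma pointwise (p : ℕ+ × ℕ+) :
    F p = (g 3 p + 3 * g 2 p + 6 * g 1 p) + (g' 3 p + 3 * g' 2 p + 6 * g' 1 p) := by
  rcases p with ⟨a, b⟩
  have ha := pnat_pos a
  have hb := pnat_pos b
  have h1 : (a : ℝ) ≠ 0 := ha.ne'
  have h2 : (b : ℝ) ≠ 0 := hb.ne'
  have h3 : (a : ℝ) + b ≠ 0 := by positivity
  simp only [F, g, g']
  norm_num
  field_simp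
  ring

end Zeta3Aux

open Zeta3Aux in
/-- Shuffle relation: ζ(3)·ζ(3) = 2ζ(3,3) + 6ζ(2,4) + 12ζ(1,5). -/
theorem zeta3_mul_zeta3 :
    riemannZetaValue 3 * riemannZetaValue 3 =
      2 * doubleZetaValue 3 3 + 6 * doubleZetaValue 2 4 + 12 * doubleZetaValue 1 5 := by
  have hg1 := g_summable 1 (by norm_num) (by norm_num)
  have hg2 := g_summable 2 (by norm_num) (by norm_num)
  have hg3 := g_summable 3 (by norm_num) (by norm_num)
  have hg1' := g'_summable 1 (by norm_num) (by norm_num)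
  have hg2' := g'_summable 2 (by norm_num) (by norm_num)
  have hg3' := g'_summable 3 (by norm_num) (by norm_num)
  have key : riemannZetaValue 3 * riemannZetaValue 3 = ∑' p : ℕ+ × ℕ+, F p := by
    rw [riemannZetaValue, Summable.tsum_mul_tsum hf_summable hf_summable hprod_summable]
    exact tsum_congr fun p => by rw [F, div_mul_div_comm, one_mul]
  rw [key, tsum_congr pointwise]
  rw [myTsumAdd ((hg3.add (hg2.mul_left 3)).add (hg1.mul_left 6))
    ((hg3'.add (hg2'.mul_left 3)).add (hg1'.mul_left 6)),
    myTsumAdd (hg3.add (hg2.mul_left 3)) (hg1.mul_left 6),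
    myTsumAdd hg3 (hg2.mul_left 3),
    myTsumAdd (hg3'.add (hg2'.mul_left 3)) (hg1'.mul_left 6),
    myTsumAdd hg3' (hg2'.mul_left 3),
    tsum_mul_left, tsum_mul_left, tsum_mul_left, tsum_mul_left,
    tsum_g'_eq, tsum_g'_eq, tsum_g'_eq,
    tsum_g_eq, tsum_g_eq, tsum_g_eq]
  norm_num
  ring
end

section
/- For any nonzero complex numbers a, b with a + b ≠ 0 and positive integers m, n, one has 1/(aᵐ bⁿ) = Σ_{i=1}^{m} C(m+n-i-1, n-1) / (aⁱ (a+b)^{m+n-i}) + Σ_{j=1}^{n} C(m+n-j-1, m-1) / (bʲ (a+b)^{m+n-j}). -/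
private lemma pf_shift (s x c : ℂ) (k : ℕ) : 1/s * (c/(x * s^k)) = c/(x * s^(k+1)) := by
  rw [one_div_mul_eq_div, div_div, pow_succ, mul_assoc]

private lemma pf_rec (a b : ℂ) (ha : a ≠ 0) (hb : b ≠ 0) (hab : a + b ≠ 0) (m n : ℕ) :
    1 / (a ^ (m+1) * b ^ (n+1)) =
      1/(a+b) * (1 / (a ^ m * b ^ (n+1))) + 1/(a+b) * (1 / (a ^ (m+1) * b ^ n)) := by
  have e1 : (1:ℂ)/(a^m*b^(n+1)) = a * (1/(a^(m+1)*b^(n+1))) := by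
    rw [mul_one_div, pow_succ a m,
      show a^m*a*b^(n+1) = a*(a^m*b^(n+1)) by ring, div_mul_cancel_left₀ ha, one_div]
  have e2 : (1:ℂ)/(a^(m+1)*b^n) = b * (1/(a^(m+1)*b^(n+1))) := by
    rw [mul_one_div, pow_succ b n,
      show a^(m+1)*(b^n*b) = b*(a^(m+1)*b^n) by ring, div_mul_cancel_left₀ hb, one_div]
  rw [e1, e2, ← mul_add, ← add_mul, ← mul_assoc, one_div_mul_cancel hab, one_mul]

private lemma pf_side (x s : ℂ) (m n : ℕ) :
    1/s * (∑ i ∈ Finset.Icc 1 (m+1), (Nat.choose (m+n+2-i) (n+1) : ℂ) / (x^i * s^(m+n+3-i)))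
    + 1/s * (∑ i ∈ Finset.Icc 1 (m+2), (Nat.choose (m+n+2-i) n : ℂ) / (x^i * s^(m+n+3-i)))
    = ∑ i ∈ Finset.Icc 1 (m+2), (Nat.choose (m+n+3-i) (n+1) : ℂ) / (x^i * s^(m+n+4-i)) := by
  have hext : (∑ i ∈ Finset.Icc 1 (m+1), (Nat.choose (m+n+2-i) (n+1) : ℂ) / (x^i * s^(m+n+3-i)))
      = ∑ i ∈ Finset.Icc 1 (m+2), (Nat.choose (m+n+2-i) (n+1) : ℂ) / (x^i * s^(m+n+3-i)) := by
    rw [show m+2 = (m+1)+1 by omega, Finset.sum_Icc_succ_top (by omega : (1:ℕ) ≤ (m+1)+1)]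
    rw [show m+n+2-(m+1+1) = n by omega, Nat.choose_succ_self]
    simp
  rw [hext, ← mul_add, ← Finset.sum_add_distrib, Finset.mul_sum]
  refine Finset.sum_congr rfl fun i hi => ?_
  have hi2 : i ≤ m+2 := (Finset.mem_Icc.mp hi).2
  have hc : (Nat.choose (m+n+2-i) (n+1) : ℂ) + (Nat.choose (m+n+2-i) n : ℂ)
      = (Nat.choose (m+n+3-i) (n+1) : ℂ) := by
    rw [show m+n+3-i = (m+n+2-i)+1 by omega, Nat.choose_succ_succ, Nat.cast_add, add_comm]
  rw [← add_div, hc, pf_shift, show m+n+3-i+1 = m+n+4-i by omega]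

private lemma pf_edge (x y : ℂ) (hx : x ≠ 0) (hy : y ≠ 0) (hxy : x + y ≠ 0) (n : ℕ) :
    1 / (x * y^(n+1)) =
      1/(x * (x+y)^(n+1)) + ∑ j ∈ Finset.Icc 1 (n+1), 1/(y^j * (x+y)^(n+2-j)) := by
  induction n with
  | zero =>
    simp only [Finset.Icc_self, Finset.sum_singleton, pow_one]
    norm_num
    field_simp
    ring
  | succ n ih =>
    have key : 1/(x * y^(n+1+1)) = 1/(x+y) * (1/y^(n+1+1)) + 1/(x+y) * (1/(x * y^(n+1))) := by
      have e1 : (1:ℂ)/y^(n+1+1) = x * (1/(x*y^(n+1+1))) := by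
        rw [mul_one_div, div_mul_cancel_left₀ hx, one_div]
      have e2 : (1:ℂ)/(x*y^(n+1)) = y * (1/(x*y^(n+1+1))) := by
        rw [mul_one_div, pow_succ y (n+1),
          show x*(y^(n+1)*y) = y*(x*y^(n+1)) by ring, div_mul_cancel_left₀ hy, one_div]
      rw [e1, e2, ← mul_add, ← add_mul, ← mul_assoc, one_div_mul_cancel hxy, one_mul]
    rw [key, ih, Finset.sum_Icc_succ_top (by omega : (1:ℕ) ≤ (n+1)+1)]
    have hs : 1/(x+y) * (∑ j ∈ Finset.Icc 1 (n+1), (1:ℂ)/(y^j * (x+y)^(n+2-j)))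
        = ∑ j ∈ Finset.Icc 1 (n+1), (1:ℂ)/(y^j * (x+y)^(n+1+2-j)) := by
      rw [Finset.mul_sum]
      refine Finset.sum_congr rfl fun j hj => ?_
      have hj2 : j ≤ n+1 := (Finset.mem_Icc.mp hj).2
      rw [pf_shift, show n+2-j+1 = n+1+2-j by omega]
    rw [mul_add, hs, show n+1+2-(n+1+1) = 1 by omega, pow_one]
    rw [show 1/(x+y) * ((1:ℂ)/(x*(x+y)^(n+1))) = 1/(x*(x+y)^(n+1+1)) from by
      rw [pf_shift]]
    rw [show 1/(x+y) * ((1:ℂ)/y^(n+1+1)) = 1/(y^(n+1+1)*(x+y)) from by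
      rw [one_div_mul_eq_div, div_div, mul_comm]]
    ring

private lemma pf_aux (a b : ℂ) (ha : a ≠ 0) (hb : b ≠ 0) (hab : a + b ≠ 0) (m n : ℕ) :
    1 / (a ^ (m+1) * b ^ (n+1)) =
      (∑ i ∈ Finset.Icc 1 (m+1), (Nat.choose (m+n+1-i) n : ℂ) / (a ^ i * (a + b) ^ (m+n+2-i))) +
      (∑ j ∈ Finset.Icc 1 (n+1), (Nat.choose (m+n+1-j) m : ℂ) / (b ^ j * (a + b) ^ (m+n+2-j))) := by
  induction m generalizing n with
  | zero =>
    -- reduce to pf_edge a b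
    have h := pf_edge a b ha hb hab n
    simp only [Nat.zero_add, zero_add, Finset.Icc_self, Finset.sum_singleton,
      Nat.add_sub_cancel, Nat.choose_self, Nat.choose_zero_right, Nat.cast_one, pow_one] at *
    convert h using 2
    rw [show n + 2 - 1 = n + 1 by omega]
  | succ m ihm =>
    induction n with
    | zero =>
      have h := pf_edge b a hb ha (by rwa [add_comm]) (m+1)
      rw [add_comm b a] at h
      simp only [Nat.add_zero, Nat.zero_add, Nat.choose_zero_right, Nat.cast_one,
        Finset.Icc_self, Finset.sum_singleton, pow_one, Nat.add_sub_cancel, Nat.choose_self,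
        show m+1+2-1 = m+1+1 by omega]
      linear_combination h
    | succ n ihn =>
      rw [pf_rec a b ha hb hab (m+1) (n+1), ihm (n+1), ihn]
      simp only [show m+(n+1)+1 = m+n+2 by omega, show m+(n+1)+2 = m+n+3 by omega,
        show m+1+n+1 = m+n+2 by omega, show m+1+n+2 = m+n+3 by omega,
        show m+1+(n+1)+1 = m+n+3 by omega, show m+1+(n+1)+2 = m+n+4 by omega,
        show n+1+1 = n+2 by omega, show m+1+1 = m+2 by omega]
      have h1 := pf_side a (a+b) m n
      have h2 := pf_side b (a+b) n m
      rw [show n+m+2 = m+n+2 by omega, show n+m+3 = m+n+3 by omega,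
        show n+m+4 = m+n+4 by omega] at h2
      linear_combination h1 + h2

/-- General partial-fraction (shuffle) identity:
1/(aᵐbⁿ) = Σ_{i=1}^m C(m+n-i-1, n-1)/(aⁱ(a+b)^{m+n-i}) + Σ_{j=1}^n C(m+n-j-1, m-1)/(bʲ(a+b)^{m+n-j}). -/
theorem partial_fraction_general (a b : ℂ) (ha : a ≠ 0) (hb : b ≠ 0) (hab : a + b ≠ 0)
    (m n : ℕ) (hm : 0 < m) (hn : 0 < n) :
    1 / (a ^ m * b ^ n) =
      (∑ i ∈ Finset.Icc 1 m,
        (Nat.choose (m + n - i - 1) (n - 1) : ℂ) / (a ^ i * (a + b) ^ (m + n - i))) +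
      (∑ j ∈ Finset.Icc 1 n,
        (Nat.choose (m + n - j - 1) (m - 1) : ℂ) / (b ^ j * (a + b) ^ (m + n - j))) := by
  obtain ⟨m, rfl⟩ : ∃ k, m = k + 1 := ⟨m - 1, by omega⟩
  obtain ⟨n, rfl⟩ : ∃ k, n = k + 1 := ⟨n - 1, by omega⟩
  rw [pf_aux a b ha hb hab m n]
  congr 1
  · refine Finset.sum_congr rfl fun i hi => ?_
    have hi2 : i ≤ m + 1 := (Finset.mem_Icc.mp hi).2
    rw [show m+1+(n+1)-i-1 = m+n+1-i by omega, show m+1+(n+1)-i = m+n+2-i by omega,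
      show n+1-1 = n by omega]
  · refine Finset.sum_congr rfl fun j hj => ?_
    have hj2 : j ≤ n + 1 := (Finset.mem_Icc.mp hj).2
    rw [show m+1+(n+1)-j-1 = m+n+1-j by omega, show m+1+(n+1)-j = m+n+2-j by omega,
      show m+1-1 = m by omega]
end

section
/- If α, β ∈ ℂ satisfy Re(α) > 0 and Re(α+β) > 0, then the integral of exp(-α t₁ - β t₃) dt₁ dt₂ dt₃ dt₄ over the simplex t₁ > t₂ > t₃ > t₄ > 0 equals 1/(α²(α+β)²). -/
open MeasureTheory

/-- A shear `(x, y) ↦ (x + h y, y)` on `ℝ × γ` is measure preserving. -/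
lemma mp_shear {γ : Type*} [MeasureSpace γ] [SigmaFinite (volume : Measure γ)]
    {h : γ → ℝ} (hh : Measurable h) :
    MeasurePreserving (fun p : ℝ × γ => (p.1 + h p.2, p.2)) volume volume := by
  have hsk : MeasurePreserving (fun q : γ × ℝ => (q.1, q.2 + h q.1))
      ((volume : Measure γ).prod volume) ((volume : Measure γ).prod volume) :=
    (MeasurePreserving.id _).skew_product (g := fun x y => y + h x)
      (measurable_snd.add (hh.comp measurable_fst))
      (Filter.Eventually.of_forall fun x => map_add_right_eq_self volume (h x))
  have := (Measure.measurePreserving_swap.comp hsk).comp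
    (Measure.measurePreserving_swap (μ := (volume : Measure ℝ)) (ν := (volume : Measure γ)))
  rw [Measure.volume_eq_prod]
  exact this

lemma integral_cexp_neg {c : ℂ} (hc : 0 < c.re) :
    ∫ t : ℝ in Set.Ioi 0, Complex.exp (-c * t) = 1 / c := by
  have hc0 : c ≠ 0 := fun h => by simp [h] at hc
  have hint : IntegrableOn (fun t : ℝ => Complex.exp (-c * t)) (Set.Ioi 0) := by
    apply Integrable.mono' (g := fun t : ℝ => Real.exp (-c.re * t))
      (exp_neg_integrableOn_Ioi 0 hc)
    · exact (Complex.continuous_exp.comp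
        (continuous_const.mul Complex.continuous_ofReal)).aestronglyMeasurable
    · filter_upwards with t
      rw [Complex.norm_exp]
      simp [Complex.mul_re]
  have h1 : Filter.Tendsto (fun T : ℝ => ∫ t in (0:ℝ)..T, Complex.exp (-c * t))
      Filter.atTop (nhds (∫ t : ℝ in Set.Ioi 0, Complex.exp (-c * t))) :=
    intervalIntegral_tendsto_integral_Ioi 0 hint Filter.tendsto_id
  have h2 : Filter.Tendsto (fun T : ℝ => ∫ t in (0:ℝ)..T, Complex.exp (-c * t))
      Filter.atTop (nhds (1 / c)) := by
    have heq : ∀ T : ℝ, (∫ t in (0:ℝ)..T, Complex.exp (-c * t))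
        = (Complex.exp (-c * T) - 1) / (-c) := by
      intro T
      rw [integral_exp_mul_complex (neg_ne_zero.mpr hc0)]
      simp
    simp_rw [heq]
    have h3 : Filter.Tendsto (fun T : ℝ => Complex.exp (-c * T)) Filter.atTop (nhds 0) := by
      rw [tendsto_zero_iff_norm_tendsto_zero]
      have : ∀ T : ℝ, ‖Complex.exp (-c * T)‖ = Real.exp (-c.re * T) := by
        intro T
        rw [Complex.norm_exp]
        simp [Complex.mul_re]
      simp_rw [this]
      exact Real.tendsto_exp_atBot.comp
        (Filter.Tendsto.const_mul_atTop_of_neg (neg_neg_iff_pos.mpr hc) Filter.tendsto_id)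
    have := ((h3.sub_const 1).div_const (-c))
    convert this using 2
    rw [zero_sub, neg_div_neg_eq, one_div]
  exact tendsto_nhds_unique h1 h2

/-- Integral representation of the refined MDZV term ζ^{(1)}(2,2):
∫_{t₁>t₂>t₃>t₄>0} exp(-αt₁ - βt₃) = 1/(α²(α+β)²). -/
theorem integral_simplex_zeta22 (α β : ℂ) (hα : 0 < α.re) (hαβ : 0 < (α + β).re) :
    ∫ p : ℝ × ℝ × ℝ × ℝ in
        {p : ℝ × ℝ × ℝ × ℝ |
          0 < p.2.2.2 ∧ p.2.2.2 < p.2.2.1 ∧ p.2.2.1 < p.2.1 ∧ p.2.1 < p.1},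
        Complex.exp (-α * p.1 - β * p.2.2.1) = 1 / (α ^ 2 * (α + β) ^ 2) := by
  set S : Set (ℝ × ℝ × ℝ × ℝ) :=
    {p : ℝ × ℝ × ℝ × ℝ | 0 < p.2.2.2 ∧ p.2.2.2 < p.2.2.1 ∧ p.2.2.1 < p.2.1 ∧ p.2.1 < p.1}
  set f : ℝ × ℝ × ℝ × ℝ → ℂ := fun p => Complex.exp (-α * p.1 - β * p.2.2.1) with hf
  set T : ℝ × ℝ × ℝ × ℝ → ℝ × ℝ × ℝ × ℝ :=
    fun s => (s.1 + (s.2.1 + (s.2.2.1 + s.2.2.2)), s.2.1 + (s.2.2.1 + s.2.2.2),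
      s.2.2.1 + s.2.2.2, s.2.2.2) with hTdef
  -- T is measure preserving
  have hC : MeasurePreserving
      (fun p : ℝ × ℝ × ℝ × ℝ => (p.1, p.2.1, p.2.2.1 + p.2.2.2, p.2.2.2))
      volume volume := by
    rw [Measure.volume_eq_prod]
    exact (MeasurePreserving.id _).prod
      ((MeasurePreserving.id (volume : Measure ℝ)).prod (mp_shear measurable_id))
  have hB : MeasurePreserving
      (fun p : ℝ × ℝ × ℝ × ℝ => (p.1, p.2.1 + p.2.2.1, p.2.2))
      volume volume := by
    rw [Measure.volume_eq_prod]
    exact (MeasurePreserving.id (volume : Measure ℝ)).prod (mp_shear measurable_fst)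
  have hA : MeasurePreserving
      (fun p : ℝ × ℝ × ℝ × ℝ => (p.1 + p.2.1, p.2)) volume volume :=
    mp_shear measurable_fst
  have hT : MeasurePreserving T volume volume := (hA.comp hB).comp hC
  -- S is measurable
  have hSm : MeasurableSet S := by
    apply MeasurableSet.inter
    · exact measurableSet_lt measurable_const
        (measurable_snd.comp (measurable_snd.comp measurable_snd))
    apply MeasurableSet.inter
    · exact measurableSet_lt (measurable_snd.comp (measurable_snd.comp measurable_snd))
        (measurable_fst.comp (measurable_snd.comp measurable_snd))
    apply MeasurableSet.inter
    · exact measurableSet_lt (measurable_fst.comp (measurable_snd.comp measurable_snd))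
        (measurable_fst.comp measurable_snd)
    · exact measurableSet_lt (measurable_fst.comp measurable_snd) measurable_fst
  -- f is (ae strongly) measurable
  have hfc : Continuous f := by
    apply Complex.continuous_exp.comp
    fun_prop
  -- preimage of S under T
  have hpre : T ⁻¹' S = Set.Ioi (0:ℝ) ×ˢ (Set.Ioi (0:ℝ) ×ˢ (Set.Ioi (0:ℝ) ×ˢ Set.Ioi (0:ℝ))) := by
    ext ⟨s1, s2, s3, s4⟩
    simp only [Set.mem_preimage, Set.mem_setOf_eq, Set.mem_prod, Set.mem_Ioi, hTdef, S]
    constructor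
    · rintro ⟨h1, h2, h3, h4⟩
      refine ⟨by linarith, by linarith, by linarith, h1⟩
    · rintro ⟨h1, h2, h3, h4⟩
      refine ⟨h4, by linarith, by linarith, by linarith⟩
  -- integrand after change of variables is a product
  have hprod : ∀ s : ℝ × ℝ × ℝ × ℝ, f (T s) =
      Complex.exp (-α * s.1) * (Complex.exp (-α * s.2.1) *
        (Complex.exp (-(α + β) * s.2.2.1) * Complex.exp (-(α + β) * s.2.2.2))) := by
    rintro ⟨s1, s2, s3, s4⟩
    simp only [hf, hTdef, ← Complex.exp_add]
    congr 1
    push_cast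
    ring
  calc ∫ p in S, f p = ∫ p in S, f p ∂(Measure.map T volume) := by rw [hT.map_eq]
    _ = ∫ s in T ⁻¹' S, f (T s) := by
        exact setIntegral_map hSm
          (by rw [hT.map_eq]; exact hfc.aestronglyMeasurable) hT.measurable.aemeasurable
    _ = ∫ s in Set.Ioi (0:ℝ) ×ˢ (Set.Ioi (0:ℝ) ×ˢ (Set.Ioi (0:ℝ) ×ˢ Set.Ioi (0:ℝ))),
          Complex.exp (-α * s.1) * (Complex.exp (-α * s.2.1) *
            (Complex.exp (-(α + β) * s.2.2.1) * Complex.exp (-(α + β) * s.2.2.2))) := by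
        rw [hpre]
        exact setIntegral_congr_fun (by measurability) fun s _ => hprod s
    _ = (∫ t : ℝ in Set.Ioi 0, Complex.exp (-α * t)) *
          ((∫ t : ℝ in Set.Ioi 0, Complex.exp (-α * t)) *
            ((∫ t : ℝ in Set.Ioi 0, Complex.exp (-(α + β) * t)) *
              (∫ t : ℝ in Set.Ioi 0, Complex.exp (-(α + β) * t)))) := by
        rw [Measure.volume_eq_prod, setIntegral_prod_mul (fun t : ℝ => Complex.exp (-α * t))
          (fun y : ℝ × ℝ × ℝ => Complex.exp (-α * y.1) *
            (Complex.exp (-(α + β) * y.2.1) * Complex.exp (-(α + β) * y.2.2)))]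
        congr 1
        rw [Measure.volume_eq_prod, setIntegral_prod_mul (fun t : ℝ => Complex.exp (-α * t))
          (fun y : ℝ × ℝ => Complex.exp (-(α + β) * y.1) * Complex.exp (-(α + β) * y.2))]
        congr 1
        rw [Measure.volume_eq_prod, setIntegral_prod_mul (fun t : ℝ => Complex.exp (-(α + β) * t))
          (fun t : ℝ => Complex.exp (-(α + β) * t))]
    _ = 1 / α * (1 / α * (1 / (α + β) * (1 / (α + β)))) := by
        rw [integral_cexp_neg hα, integral_cexp_neg hαβ]
    _ = 1 / (α ^ 2 * (α + β) ^ 2) := by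
        simp only [one_div, ← mul_inv]
        congr 1
        ring
end

section
/- If α, β ∈ ℂ satisfy Re(α) > 0 and Re(α+β) > 0, then the integral of exp(-α t₁ - β t₂) dt₁ dt₂ dt₃ dt₄ over the simplex t₁ > t₂ > t₃ > t₄ > 0 equals 1/(α(α+β)³). -/
open MeasureTheory Set Filter Topology

/-- The basic exponential integral: `∫_0^∞ e^{-ct} dt = 1/c` for `Re c > 0`. -/
lemma integral_cexp_neg_mul_Ioi_zero {c : ℂ} (hc : 0 < c.re) :
    ∫ t : ℝ in Ioi (0 : ℝ), Complex.exp (-c * t) = 1 / c := by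
  have hc0 : c ≠ 0 := fun h => by simp [h] at hc
  have hint : IntegrableOn (fun t : ℝ => Complex.exp (-c * t)) (Ioi (0 : ℝ)) := by
    refine (exp_neg_integrableOn_Ioi 0 hc).mono' ?_ ?_
    · exact (Complex.continuous_exp.comp (by continuity)).aestronglyMeasurable
    · filter_upwards with t
      rw [Complex.norm_exp]
      simp
  have hderiv : ∀ x ∈ Ioi (0 : ℝ),
      HasDerivAt (fun t : ℝ => -(Complex.exp (-c * t) / c)) (Complex.exp (-c * x)) x := by
    intro x _
    have h1 : HasDerivAt (fun t : ℝ => -c * (t : ℂ)) (-c) x := by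
      simpa using ((hasDerivAt_id x).ofReal_comp.const_mul (-c))
    have h2 := h1.cexp
    have h3 := (h2.div_const c).neg
    have heq : Complex.exp (-c * x) = -(Complex.exp (-c * (x:ℂ)) * -c / c) := by
      field_simp
    rw [heq]
    exact h3
  have hcont : ContinuousWithinAt (fun t : ℝ => -(Complex.exp (-c * t) / c)) (Ici 0) 0 :=
    ((Complex.continuous_exp.comp (by continuity)).div_const c).neg.continuousWithinAt
  have htend : Tendsto (fun t : ℝ => -(Complex.exp (-c * t) / c)) atTop (𝓝 0) := by
    apply squeeze_zero_norm (a := fun t : ℝ => Real.exp (-(c.re * t)) / ‖c‖) (t₀ := atTop)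
    · intro t
      rw [norm_neg, norm_div, Complex.norm_exp]
      simp [neg_mul]
    · have h1 : Tendsto (fun t : ℝ => c.re * t) atTop atTop :=
        tendsto_id.const_mul_atTop hc
      have h2 := Real.tendsto_exp_neg_atTop_nhds_zero.comp h1
      simpa using h2.div_const ‖c‖
  have := integral_Ioi_of_hasDerivAt_of_tendsto hcont hderiv hint htend
  rw [this]
  simp [Complex.ofReal_zero, mul_zero, Complex.exp_zero, one_div]

/-- Shear maps preserve volume. -/
lemma shear_measurePreserving {α : Type*} [MeasureSpace α] [SFinite (volume : Measure α)]
    {f : α → α} (hf : MeasurePreserving f volume volume) {s : α → ℝ} (hs : Measurable s) :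
    MeasurePreserving (fun p : ℝ × α => (p.1 + s p.2, f p.2)) volume volume := by
  have h1 : MeasurePreserving (fun q : α × ℝ => (f q.1, q.2 + s q.1))
      ((volume : Measure α).prod (volume : Measure ℝ))
      ((volume : Measure α).prod (volume : Measure ℝ)) :=
    hf.skew_product (g := fun a c => c + s a) (measurable_snd.add (hs.comp measurable_fst))
      (Filter.Eventually.of_forall fun a => map_add_right_eq_self volume (s a))
  have h2 : MeasurePreserving (fun p : ℝ × α => (p.1 + s p.2, f p.2))
      ((volume : Measure ℝ).prod (volume : Measure α))
      ((volume : Measure ℝ).prod (volume : Measure α)) :=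
    Measure.measurePreserving_swap.comp (h1.comp Measure.measurePreserving_swap)
  rw [show (volume : Measure (ℝ × α)) = (volume : Measure ℝ).prod (volume : Measure α) from rfl]
  exact h2

/-- Integral representation of the refined MDZV term ζ^{(1)}(1,3):
∫_{t₁>t₂>t₃>t₄>0} exp(-αt₁ - βt₂) = 1/(α(α+β)³). -/
theorem integral_simplex_zeta13 (α β : ℂ) (hα : 0 < α.re) (hαβ : 0 < (α + β).re) :
    ∫ p : ℝ × ℝ × ℝ × ℝ in
        {p : ℝ × ℝ × ℝ × ℝ |
          0 < p.2.2.2 ∧ p.2.2.2 < p.2.2.1 ∧ p.2.2.1 < p.2.1 ∧ p.2.1 < p.1},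
        Complex.exp (-α * p.1 - β * p.2.1) = 1 / (α * (α + β) ^ 3) := by
  -- the simplex
  set S : Set (ℝ × ℝ × ℝ × ℝ) :=
    {p : ℝ × ℝ × ℝ × ℝ | 0 < p.2.2.2 ∧ p.2.2.2 < p.2.2.1 ∧ p.2.2.1 < p.2.1 ∧ p.2.1 < p.1}
  -- the change of variables map
  set T : ℝ × ℝ × ℝ × ℝ → ℝ × ℝ × ℝ × ℝ := fun p =>
    (p.1 + (p.2.1 + (p.2.2.1 + p.2.2.2)),
      (p.2.1 + (p.2.2.1 + p.2.2.2), (p.2.2.1 + p.2.2.2, p.2.2.2))) with hTdef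
  -- T preserves volume
  have hT2 : MeasurePreserving (fun p : ℝ × ℝ => (p.1 + p.2, p.2)) volume volume := by
    rw [show (volume : Measure (ℝ × ℝ)) = (volume : Measure ℝ).prod (volume : Measure ℝ)
      from rfl]
    exact measurePreserving_add_prod _ _
  have hT3 : MeasurePreserving
      (fun p : ℝ × ℝ × ℝ => (p.1 + (p.2.1 + p.2.2), (p.2.1 + p.2.2, p.2.2)))
      volume volume :=
    shear_measurePreserving hT2 (measurable_fst.add measurable_snd)
  have hT4 : MeasurePreserving T volume volume :=
    shear_measurePreserving hT3
      (measurable_fst.add ((measurable_fst.comp measurable_snd).add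
        (measurable_snd.comp measurable_snd)))
  -- T is a measurable embedding (it is a homeomorphism)
  have hemb : MeasurableEmbedding T := by
    exact Homeomorph.measurableEmbedding
      { toFun := T
        invFun := fun t => (t.1 - t.2.1, (t.2.1 - t.2.2.1, (t.2.2.1 - t.2.2.2, t.2.2.2)))
        left_inv := by intro p; simp [hTdef]
        right_inv := by
          intro t
          simp only [hTdef]
          refine Prod.ext ?_ (Prod.ext ?_ (Prod.ext ?_ ?_)) <;> simp <;> ring
        continuous_toFun := by simp only [hTdef]; fun_prop
        continuous_invFun := by fun_prop }
  -- the preimage of the simplex is the positive orthant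
  have hpre : T ⁻¹' S = Ioi (0:ℝ) ×ˢ (Ioi (0:ℝ) ×ˢ (Ioi (0:ℝ) ×ˢ Ioi (0:ℝ))) := by
    ext ⟨a, b, c, d⟩
    simp only [hTdef, Set.mem_preimage, Set.mem_setOf_eq, Set.mem_prod, Set.mem_Ioi, S]
    constructor
    · rintro ⟨h1, h2, h3, h4⟩
      refine ⟨by linarith, by linarith, by linarith, h1⟩
    · rintro ⟨h1, h2, h3, h4⟩
      refine ⟨h4, by linarith, by linarith, by linarith⟩
  -- change variables
  rw [← hT4.setIntegral_preimage_emb hemb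
    (fun p => Complex.exp (-α * p.1 - β * p.2.1)) S, hpre]
  -- the integrand factors
  have hfactor : ∀ p : ℝ × ℝ × ℝ × ℝ,
      Complex.exp (-α * (T p).1 - β * (T p).2.1) =
        Complex.exp (-α * p.1) * (Complex.exp (-(α + β) * p.2.1) *
          (Complex.exp (-(α + β) * p.2.2.1) * Complex.exp (-(α + β) * p.2.2.2))) := by
    intro p
    rw [← Complex.exp_add, ← Complex.exp_add, ← Complex.exp_add]
    congr 1
    simp only [hTdef]
    push_cast
    ring
  simp only [hfactor]
  -- split the integral over the product set
  rw [show (volume : Measure (ℝ × ℝ × ℝ × ℝ))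
      = (volume : Measure ℝ).prod (volume : Measure (ℝ × ℝ × ℝ)) from rfl,
    setIntegral_prod_mul (fun x : ℝ => Complex.exp (-α * x))
      (fun y : ℝ × ℝ × ℝ => Complex.exp (-(α + β) * y.1) *
        (Complex.exp (-(α + β) * y.2.1) * Complex.exp (-(α + β) * y.2.2)))
      (Ioi 0) (Ioi 0 ×ˢ (Ioi 0 ×ˢ Ioi 0))]
  rw [show (volume : Measure (ℝ × ℝ × ℝ))
      = (volume : Measure ℝ).prod (volume : Measure (ℝ × ℝ)) from rfl,
    setIntegral_prod_mul (fun x : ℝ => Complex.exp (-(α + β) * x))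
      (fun y : ℝ × ℝ => Complex.exp (-(α + β) * y.1) * Complex.exp (-(α + β) * y.2))
      (Ioi 0) (Ioi 0 ×ˢ Ioi 0)]
  rw [show (volume : Measure (ℝ × ℝ))
      = (volume : Measure ℝ).prod (volume : Measure ℝ) from rfl,
    setIntegral_prod_mul (fun x : ℝ => Complex.exp (-(α + β) * x))
      (fun y : ℝ => Complex.exp (-(α + β) * y)) (Ioi 0) (Ioi 0)]
  rw [integral_cexp_neg_mul_Ioi_zero hα, integral_cexp_neg_mul_Ioi_zero hαβ]
  rw [div_mul_div_comm, div_mul_div_comm, div_mul_div_comm]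
  ring_nf
end
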